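/- arXiv:2012.04800 — 2 statements merged into one kernel-verified Lean document; each statement's English description precedes it below -/
import Mathlib

section
/- Let ω ∈ ℝ, β ∈ ℝ^d with β ≠ 0, and x̂ ∈ ℝ^d. Define L : ℝ → ℝ by L(k) = ω² ‖β‖₂² k² + ω / (1 + exp(-⟨β, x̂⟩ + k ω ‖β‖₂²)). Then L attains its infimum over ℝ at some point k⋆ ∈ [0, 1/8], i.e., inf_{k ∈ ℝ} L(k) = min_{k ∈ [0, 1/8]} L(k). -/
theorem univariate_min_in_interval (d : ℕ) (β : EuclideanSpace ℝ (Fin d)) (hβ : β ≠ 0)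
    (ω : ℝ) (xhat : EuclideanSpace ℝ (Fin d)) (L : ℝ → ℝ)
    (hL : ∀ k, L k = ω ^ 2 * ‖β‖ ^ 2 * k ^ 2
        + ω / (1 + Real.exp (-(inner ℝ β xhat : ℝ) + k * ω * ‖β‖ ^ 2))) :
    ∃ kstar ∈ Set.Icc (0:ℝ) (1/8), ∀ k : ℝ, L kstar ≤ L k := by
  rcases eq_or_ne ω 0 with hω | hω
  · refine ⟨0, by norm_num, fun k => ?_⟩
    simp [hL, hω]
  set c : ℝ := (inner ℝ β xhat : ℝ) with hc
  set a : ℝ := ω ^ 2 * ‖β‖ ^ 2 with ha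
  have hβn : (0:ℝ) < ‖β‖ := norm_pos_iff.mpr hβ
  have hapos : 0 < a := by positivity
  set u : ℝ → ℝ := fun k => -c + k * ω * ‖β‖ ^ 2 with hu
  set D : ℝ → ℝ := fun k => 1 + Real.exp (u k) with hD
  have hDpos : ∀ k, 0 < D k := fun k => by positivity
  have hLf : L = fun k => a * k ^ 2 + ω / D k := funext hL
  -- continuity
  have hcont : Continuous L := by
    rw [hLf]
    apply Continuous.add (by continuity)
    exact continuous_const.div (by continuity) fun k => (hDpos k).ne'
  -- derivative
  have hderiv : ∀ k, HasDerivAt L (2 * a * k - a * (Real.exp (u k) / (D k) ^ 2)) k := by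
    intro k
    have h1 : HasDerivAt (fun k : ℝ => a * k ^ 2) (a * (2 * k)) k := by
      simpa using (hasDerivAt_pow 2 k).const_mul a
    have h2 : HasDerivAt u (ω * ‖β‖ ^ 2) k := by
      have : HasDerivAt (fun k : ℝ => k * ω * ‖β‖ ^ 2) (1 * ω * ‖β‖ ^ 2) k :=
        ((hasDerivAt_id k).mul_const ω).mul_const (‖β‖ ^ 2)
      simpa [hu] using this.const_add (-c)
    have h3 : HasDerivAt (fun k => Real.exp (u k)) (Real.exp (u k) * (ω * ‖β‖ ^ 2)) k :=
      (Real.hasDerivAt_exp (u k)).comp k h2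
    have h4 : HasDerivAt D (Real.exp (u k) * (ω * ‖β‖ ^ 2)) k := by
      simpa [hD] using h3.const_add 1
    have h5 : HasDerivAt (fun k => ω / D k)
        ((0 * D k - ω * (Real.exp (u k) * (ω * ‖β‖ ^ 2))) / (D k) ^ 2) k :=
      (hasDerivAt_const k ω).div h4 (hDpos k).ne'
    have h6 := h1.add h5
    rw [hLf]
    convert h6 using 1
    have : ω * (ω * ‖β‖ ^ 2) = a := by rw [ha]; ring
    case e'_4 => rfl
    case e'_5 => rfl
    case e'_8 => rfl
    rw [ha]
    ring
  -- bound on exp u / D^2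
  have hbound : ∀ k, Real.exp (u k) / (D k) ^ 2 ≤ 1 / 4 := by
    intro k
    rw [div_le_div_iff₀ (by positivity) (by norm_num)]
    have h := sq_nonneg (1 - Real.exp (u k))
    simp only [hD]
    nlinarith [Real.exp_pos (u k)]
  have hbound' : ∀ k, 0 < Real.exp (u k) / (D k) ^ 2 := fun k => by positivity
  -- deriv values
  have hderiv' : ∀ k, deriv L k = 2 * a * k - a * (Real.exp (u k) / (D k) ^ 2) :=
    fun k => (hderiv k).deriv
  -- monotone on [1/8, ∞)
  have hmono : StrictMonoOn L (Set.Ici (1/8 : ℝ)) := by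
    apply StrictMonoOn.mono (s := Set.Ici (1/8 : ℝ)) ?_ le_rfl
    apply strictMonoOn_of_deriv_pos (convex_Ici _) hcont.continuousOn
    intro x hx
    rw [interior_Ici] at hx
    rw [hderiv' x]
    have h1 : Real.exp (u x) / (D x) ^ 2 ≤ 1 / 4 := hbound x
    have : (1:ℝ)/8 < x := hx
    nlinarith
  -- antitone on (-∞, 0]
  have hanti : StrictAntiOn L (Set.Iic (0 : ℝ)) := by
    apply strictAntiOn_of_deriv_neg (convex_Iic _) hcont.continuousOn
    intro x hx
    rw [interior_Iic] at hx
    rw [hderiv' x]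
    have h1 := hbound' x
    have : x < 0 := hx
    nlinarith
  -- min on compact interval
  obtain ⟨kstar, hks, hmin⟩ := (isCompact_Icc : IsCompact (Set.Icc (0:ℝ) (1/8))).exists_isMinOn
    ⟨0, by norm_num⟩ hcont.continuousOn
  refine ⟨kstar, hks, fun k => ?_⟩
  rcases le_or_gt k 0 with hk | hk
  · rcases eq_or_lt_of_le hk with hk0 | hk0
    · exact hmin (by rw [hk0]; constructor <;> norm_num)
    · have h1 : L kstar ≤ L 0 := hmin (by constructor <;> norm_num)
      have h2 : L 0 < L k := hanti hk Set.self_mem_Iic hk0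
      linarith
  · rcases le_or_gt k (1/8) with hk8 | hk8
    · exact hmin ⟨hk.le, hk8⟩
    · have h1 : L kstar ≤ L (1/8) := hmin (by constructor <;> norm_num)
      have h2 : L (1/8) < L k := hmono Set.self_mem_Ici hk8.le hk8
      linarith
end

section
/- Let ω ∈ ℝ, β ∈ ℝ^d, x̂ ∈ ℝ^d. Then inf over x ∈ ℝ^d of ‖x - x̂‖₂² + ω/(1 + exp(-⟨β, x⟩)) equals inf over k ∈ ℝ of ω² ‖β‖₂² k² + ω/(1 + exp(-⟨β, x̂⟩ + k ω ‖β‖₂²)). -/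
lemma logit_lb (ω s : ℝ) : min 0 ω ≤ ω / (1 + Real.exp s) := by
  have h : (0:ℝ) < 1 + Real.exp s := by positivity
  rcases le_or_gt 0 ω with hw | hw
  · exact le_trans (min_le_left _ _) (by positivity)
  · refine le_trans (min_le_right 0 ω) ?_
    have hinv : (1 + Real.exp s)⁻¹ ≤ 1 := by
      rw [inv_le_one_iff₀]; right; nlinarith [Real.exp_pos s]
    calc ω = ω * 1 := (mul_one ω).symm
    _ ≤ ω * (1 + Real.exp s)⁻¹ := mul_le_mul_of_nonpos_left hinv hw.le
    _ = ω / (1 + Real.exp s) := (div_eq_mul_inv ω _).symm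

theorem univariate_reduction (d : ℕ) (ω : ℝ) (β xhat : EuclideanSpace ℝ (Fin d)) :
    (⨅ x : EuclideanSpace ℝ (Fin d),
        (‖x - xhat‖ ^ 2 + ω / (1 + Real.exp (-(inner ℝ β x : ℝ)))))
      = ⨅ k : ℝ, (ω ^ 2 * ‖β‖ ^ 2 * k ^ 2
          + ω / (1 + Real.exp (-(inner ℝ β xhat : ℝ) + k * ω * ‖β‖ ^ 2))) := by
  set f : EuclideanSpace ℝ (Fin d) → ℝ :=
    fun x => ‖x - xhat‖ ^ 2 + ω / (1 + Real.exp (-(inner ℝ β x : ℝ))) with hf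
  set g : ℝ → ℝ :=
    fun k => ω ^ 2 * ‖β‖ ^ 2 * k ^ 2
      + ω / (1 + Real.exp (-(inner ℝ β xhat : ℝ) + k * ω * ‖β‖ ^ 2)) with hg
  have hbf : BddBelow (Set.range f) := by
    refine ⟨min 0 ω, ?_⟩
    rintro _ ⟨x, rfl⟩
    have := logit_lb ω (-(inner ℝ β x : ℝ))
    have := sq_nonneg ‖x - xhat‖
    simp only [hf]; nlinarith
  have hbg : BddBelow (Set.range g) := by
    refine ⟨min 0 ω, ?_⟩
    rintro _ ⟨k, rfl⟩
    have := logit_lb ω (-(inner ℝ β xhat : ℝ) + k * ω * ‖β‖ ^ 2)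
    have h1 : 0 ≤ ω ^ 2 * ‖β‖ ^ 2 * k ^ 2 := by positivity
    simp only [hg]; nlinarith
  apply le_antisymm
  · refine le_ciInf fun k => ?_
    have hkey : f (xhat - (k * ω) • β) = g k := by
      have h1 : xhat - (k * ω) • β - xhat = -((k * ω) • β) := by abel
      have h2 : (inner ℝ β (xhat - (k * ω) • β) : ℝ)
          = (inner ℝ β xhat : ℝ) - k * ω * ‖β‖ ^ 2 := by
        rw [inner_sub_right, real_inner_smul_right, real_inner_self_eq_norm_sq]
      simp only [hf, hg, h1, h2, norm_neg, norm_smul, Real.norm_eq_abs]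
      rw [mul_pow, sq_abs]
      ring_nf

    exact hkey ▸ ciInf_le hbf _
  · refine le_ciInf fun x => ?_
    by_cases hβ : β = 0
    · refine (ciInf_le hbg 0).trans ?_
      simp only [hf, hg, hβ, inner_zero_left]
      have := sq_nonneg ‖x - xhat‖
      norm_num
    by_cases hω : ω = 0
    · refine (ciInf_le hbg 0).trans ?_
      simp only [hf, hg, hω]
      have := sq_nonneg ‖x - xhat‖
      norm_num
    · have hb : (0:ℝ) < ‖β‖ := norm_pos_iff.mpr hβ
      set t : ℝ := (inner ℝ β (x - xhat) : ℝ) with ht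
      refine (ciInf_le hbg (-t / (ω * ‖β‖ ^ 2))).trans ?_
      have hωb : ω * ‖β‖ ^ 2 ≠ 0 := by positivity
      have hk : -t / (ω * ‖β‖ ^ 2) * ω * ‖β‖ ^ 2 = -t := by
        field_simp
      have hinner : (inner ℝ β x : ℝ) = (inner ℝ β xhat : ℝ) + t := by
        simp [ht, inner_sub_right]
      have hexp : (-(inner ℝ β xhat : ℝ) + -t / (ω * ‖β‖ ^ 2) * ω * ‖β‖ ^ 2)
          = -(inner ℝ β x : ℝ) := by rw [hk, hinner]; ring
      have hsq : ω ^ 2 * ‖β‖ ^ 2 * (-t / (ω * ‖β‖ ^ 2)) ^ 2 = t ^ 2 / ‖β‖ ^ 2 := by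
        field_simp
      have hcs : |t| ≤ ‖β‖ * ‖x - xhat‖ := abs_real_inner_le_norm β (x - xhat)
      have hcs2 : t ^ 2 / ‖β‖ ^ 2 ≤ ‖x - xhat‖ ^ 2 := by
        rw [div_le_iff₀ (by positivity)]
        nlinarith [abs_nonneg t, sq_abs t]
      simp only [hf, hg, hexp, hsq]
      linarith
end
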